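/- Let a, b, k > 0 and let (x, y) ∈ ℝ² with (x, y) ≠ (0, 0). Define γ = x²/a² + y²/b², the tangential heading ψ_T = atan2(b²·x, −a²·y) (the argument of the complex number −a²·y + i·b²·x), the offset angle ψ_O = arctan(k·(γ − 1)), and the desired heading ψ_D = ψ_T + ψ_O. Then the inner product of the gradient (2x/a², 2y/b²) with the unit heading vector (cos ψ_D, sin ψ_D) satisfies (2x/a²)·cos(ψ_D) + (2y/b²)·sin(ψ_D) = −2·√(x²/a⁴ + y²/b⁴)·sin(ψ_O). -/

import Mathlib

open Real

/-- The counter-clockwise tangential heading at `(x, y)`: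
`atan2 (b² x, −a² y)`, i.e. the argument of the complex number `−a² y + i b² x`. -/
noncomputable def psiT (a b x y : ℝ) : ℝ :=
  Complex.arg ⟨-(a ^ 2) * y, b ^ 2 * x⟩

/-- The offset angle `ψ_O = arctan (k (γ − 1))` with `γ = x²/a² + y²/b²`. -/
noncomputable def psiO (a b k x y : ℝ) : ℝ :=
  Real.arctan (k * (x ^ 2 / a ^ 2 + y ^ 2 / b ^ 2 - 1))

/-- The desired heading `ψ_D = ψ_T + ψ_O`. -/
noncomputable def psiD (a b k x y : ℝ) : ℝ :=
  psiT a b x y + psiO a b k x y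

theorem gradient_heading_inner_product
    (a b k : ℝ) (ha : 0 < a) (hb : 0 < b) (hk : 0 < k)
    (x y : ℝ) (hxy : (x, y) ≠ (0, 0)) :
    (2 * x / a ^ 2) * Real.cos (psiD a b k x y) +
      (2 * y / b ^ 2) * Real.sin (psiD a b k x y) =
    -2 * Real.sqrt (x ^ 2 / a ^ 4 + y ^ 2 / b ^ 4) * Real.sin (psiO a b k x y) := by
  have ha2 : (a : ℝ) ^ 2 ≠ 0 := by positivity
  have hb2 : (b : ℝ) ^ 2 ≠ 0 := by positivity
  set z : ℂ := ⟨-(a ^ 2) * y, b ^ 2 * x⟩ with hz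
  have hzne : z ≠ 0 := by
    intro h
    have hre : -(a ^ 2) * y = 0 := by
      have := congrArg Complex.re h; simpa [hz] using this
    have him : b ^ 2 * x = 0 := by
      have := congrArg Complex.im h; simpa [hz] using this
    have hy : y = 0 := by
      rcases mul_eq_zero.mp hre with h' | h'
      · exact absurd h' (by simpa using ha2)
      · exact h'
    have hx : x = 0 := by
      rcases mul_eq_zero.mp him with h' | h'
      · exact absurd h' hb2
      · exact h'
    exact hxy (by simp [hx, hy])
  set A : ℝ := ‖z‖ with hA
  have hApos : 0 < A := by
    simpa [hA] using (norm_pos_iff.mpr hzne)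
  have hA2 : A ^ 2 = (-(a ^ 2) * y) ^ 2 + (b ^ 2 * x) ^ 2 := by
    rw [hA, Complex.sq_norm, Complex.normSq_mk]; simp [hz]; ring
  have hcos : Real.cos (psiT a b x y) = -(a ^ 2) * y / A := by
    simpa [psiT, hz, hA] using Complex.cos_arg hzne
  have hsin : Real.sin (psiT a b x y) = b ^ 2 * x / A := by
    simpa [psiT, hz, hA] using Complex.sin_arg z
  have hsqrt : Real.sqrt (x ^ 2 / a ^ 4 + y ^ 2 / b ^ 4) = A / (a ^ 2 * b ^ 2) := by
    have heq : x ^ 2 / a ^ 4 + y ^ 2 / b ^ 4 = (A / (a ^ 2 * b ^ 2)) ^ 2 := by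
      field_simp
      nlinarith [hA2]
    rw [heq, Real.sqrt_sq (by positivity)]
  rw [psiD, Real.cos_add, Real.sin_add, hcos, hsin, hsqrt]
  have hAne : A ≠ 0 := ne_of_gt hApos
  set C := Real.cos (psiO a b k x y) with hC
  set S := Real.sin (psiO a b k x y) with hS
  have expand : (2 * x / a ^ 2) * ((-(a ^ 2) * y) * C - (b ^ 2 * x) * S) +
      (2 * y / b ^ 2) * ((b ^ 2 * x) * C + (-(a ^ 2) * y) * S) =
      -2 * (A ^ 2 / (a ^ 2 * b ^ 2)) * S := by
    rw [hA2]; field_simp; ring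
  calc (2 * x / a ^ 2) * (-(a ^ 2) * y / A * C - b ^ 2 * x / A * S) +
      (2 * y / b ^ 2) * (b ^ 2 * x / A * C + -(a ^ 2) * y / A * S)
      = (1 / A) * ((2 * x / a ^ 2) * ((-(a ^ 2) * y) * C - (b ^ 2 * x) * S) +
        (2 * y / b ^ 2) * ((b ^ 2 * x) * C + (-(a ^ 2) * y) * S)) := by ring
    _ = (1 / A) * (-2 * (A ^ 2 / (a ^ 2 * b ^ 2)) * S) := by rw [expand]
    _ = -2 * (A / (a ^ 2 * b ^ 2)) * S := by field_simp
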